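/- (Property 2) Let G^s be an SCG with macro vertices W, Y and X (W ≠ Y) such that every back-door path from W to Y in G^s is blocked by {X}. Then in every candidate FT-ADMG G ∈ C(G^s), every back-door path from W_{t−λ} to Y_t in G that contains no collider (i.e., is active given the empty set) passes through a micro vertex X_{t−λ'} of the macro vertex X or through a micro vertex W_{t−λ''} of the macro vertex W with λ'' ≠ λ. -/

import Mathlib

/-!
Common definitions: mixed paths, full-time acyclic directed mixed graphs (FT-ADMGs),
summary causal graphs (SCGs), candidate FT-ADMGs, and the SCG-front-door conditions.

Micro vertices are pairs `(i, t) : Fin d × ℤ` (time series index, time);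
macro vertices are elements of `Fin d`.
-/

/-- The type of an edge as traversed on a path of a mixed graph:
`fwd` = directed edge pointing towards the next vertex, `bwd` = directed edge
pointing towards the previous vertex, `bid` = bidirected edge. -/
inductive EdgeT : Type
  | fwd
  | bwd
  | bid
  deriving DecidableEq

/-- The edge (as traversed left-to-right) has an arrowhead at its right endpoint. -/
def EdgeT.headRight : EdgeT → Prop
  | .fwd => True
  | .bwd => False
  | .bid => True

/-- The edge (as traversed left-to-right) has an arrowhead at its left endpoint. -/
def EdgeT.headLeft : EdgeT → Prop
  | .fwd => False
  | .bwd => True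
  | .bid => True

/-- A path (sequence of distinct vertices, successive ones joined by an edge) in a
mixed graph with directed relation `dir` and bidirected relation `bi`. -/
structure MPath (V : Type) (dir bi : V → V → Prop) (n : ℕ) where
  v : Fin (n + 1) → V
  e : Fin n → EdgeT
  inj : Function.Injective v
  valid_fwd : ∀ k : Fin n, e k = .fwd → dir (v k.castSucc) (v k.succ)
  valid_bwd : ∀ k : Fin n, e k = .bwd → dir (v k.succ) (v k.castSucc)
  valid_bid : ∀ k : Fin n, e k = .bid → bi (v k.castSucc) (v k.succ)

namespace MPath

variable {V : Type} {dir bi : V → V → Prop} {n : ℕ}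

/-- A directed path: all edges are directed towards the last vertex. -/
def IsDirected (p : MPath V dir bi n) : Prop :=
  ∀ k : Fin n, p.e k = EdgeT.fwd

/-- The internal vertex at position `i` is a collider: both path edges at it
have an arrowhead at it. -/
def Collider (p : MPath V dir bi n) (i : ℕ) (h1 : 0 < i) (h2 : i < n) : Prop :=
  (p.e ⟨i - 1, by omega⟩).headRight ∧ (p.e ⟨i, h2⟩).headLeft

/-- The path contains no collider (hence it is active given the empty set). -/
def ColliderFree (p : MPath V dir bi n) : Prop :=
  ∀ (i : ℕ) (h1 : 0 < i) (h2 : i < n), ¬ p.Collider i h1 h2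

/-- The path is blocked by the set `Z`: some non-collider on the path belongs to `Z`,
or some collider on the path has no descendant in `Z`. -/
def BlockedBy (p : MPath V dir bi n) (Z : Set V) : Prop :=
  ∃ (i : ℕ) (h1 : 0 < i) (h2 : i < n),
    (¬ p.Collider i h1 h2 ∧ p.v ⟨i, by omega⟩ ∈ Z) ∨
    (p.Collider i h1 h2 ∧ ∀ w, Relation.ReflTransGen dir (p.v ⟨i, by omega⟩) w → w ∉ Z)

end MPath

/-- A full-time acyclic directed mixed graph over `d` time series, time window
`{t0, …, tmax}` and maximal lag `γmax`: directed edges go forward in time with lag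
at most `γmax`, the directed part is acyclic, and the graph is stationary. -/
structure FTADMG (d : ℕ) (t0 tmax : ℤ) (γmax : ℕ) where
  dir : Fin d × ℤ → Fin d × ℤ → Prop
  bi : Fin d × ℤ → Fin d × ℤ → Prop
  dir_window : ∀ a b, dir a b → t0 ≤ a.2 ∧ a.2 ≤ tmax ∧ t0 ≤ b.2 ∧ b.2 ≤ tmax
  dir_time : ∀ a b, dir a b → a.2 ≤ b.2 ∧ b.2 - a.2 ≤ (γmax : ℤ)
  bi_window : ∀ a b, bi a b → t0 ≤ a.2 ∧ a.2 ≤ tmax ∧ t0 ≤ b.2 ∧ b.2 ≤ tmax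
  bi_symm : ∀ a b, bi a b → bi b a
  acyclic : ∀ a, ¬ Relation.TransGen dir a a
  stat_dir : ∀ (i j : Fin d) (t' t δ : ℤ),
    t0 ≤ t' → t' ≤ tmax → t0 ≤ t → t ≤ tmax →
    t0 ≤ t' + δ → t' + δ ≤ tmax → t0 ≤ t + δ → t + δ ≤ tmax →
    (dir (i, t') (j, t) ↔ dir (i, t' + δ) (j, t + δ))
  stat_bi : ∀ (i j : Fin d) (t' t δ : ℤ),
    t0 ≤ t' → t' ≤ tmax → t0 ≤ t → t ≤ tmax →
    t0 ≤ t' + δ → t' + δ ≤ tmax → t0 ≤ t + δ → t + δ ≤ tmax →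
    (bi (i, t') (j, t) ↔ bi (i, t' + δ) (j, t + δ))

/-- A summary causal graph over `d` time series (macro vertices). -/
structure SCG (d : ℕ) where
  dir : Fin d → Fin d → Prop
  bi : Fin d → Fin d → Prop

/-- `G` is a candidate FT-ADMG for the SCG `Gs`: the SCG compatible with `G` is `Gs`. -/
def IsCandidate {d : ℕ} {t0 tmax : ℤ} {γmax : ℕ} (Gs : SCG d)
    (G : FTADMG d t0 tmax γmax) : Prop :=
  (∀ i j : Fin d, Gs.dir i j ↔ ∃ t' t : ℤ, G.dir (i, t') (j, t)) ∧
  (∀ i j : Fin d, Gs.bi i j ↔ ∃ t' t : ℤ, G.bi (i, t') (j, t))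

namespace SCG

variable {d : ℕ}

/-- The path `p` (with `p.v 0 = X`) is a back-door path: it starts with
`X ←`, `X ↔`, or `X ⇄`. -/
def BackdoorStart (Gs : SCG d) {n : ℕ} (p : MPath (Fin d) Gs.dir Gs.bi n)
    (hn : 0 < n) : Prop :=
  p.e ⟨0, hn⟩ = EdgeT.bwd ∨ p.e ⟨0, hn⟩ = EdgeT.bid ∨
    (p.e ⟨0, hn⟩ = EdgeT.fwd ∧ Gs.dir (p.v ⟨1, by omega⟩) (p.v 0))

/-- Strict collider at internal position `i` of an SCG path: configuration `→ C ←`,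
and not `⇄ C ←` nor `→ C ⇄`. -/
def StrictCollider (Gs : SCG d) {n : ℕ} (p : MPath (Fin d) Gs.dir Gs.bi n)
    (i : ℕ) (h1 : 0 < i) (h2 : i < n) : Prop :=
  p.e ⟨i - 1, by omega⟩ = EdgeT.fwd ∧ p.e ⟨i, h2⟩ = EdgeT.bwd ∧
  ¬ Gs.dir (p.v ⟨i, by omega⟩) (p.v ⟨i - 1, by omega⟩) ∧
  ¬ Gs.dir (p.v ⟨i, by omega⟩) (p.v ⟨i + 1, by omega⟩)

/-- Strict non-collider at internal position `i` of an SCG path: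
configuration `→ C →`, `← C →`, or `← C ⇄`, and not `⇄ C ←`. -/
def StrictNonCollider (Gs : SCG d) {n : ℕ} (p : MPath (Fin d) Gs.dir Gs.bi n)
    (i : ℕ) (h1 : 0 < i) (h2 : i < n) : Prop :=
  (p.e ⟨i - 1, by omega⟩ = EdgeT.fwd ∧ p.e ⟨i, h2⟩ = EdgeT.fwd) ∨
  (p.e ⟨i - 1, by omega⟩ = EdgeT.bwd ∧ p.e ⟨i, h2⟩ = EdgeT.fwd) ∨
  (p.e ⟨i - 1, by omega⟩ = EdgeT.bwd ∧ p.e ⟨i, h2⟩ = EdgeT.bwd ∧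
    Gs.dir (p.v ⟨i, by omega⟩) (p.v ⟨i + 1, by omega⟩))

/-- The SCG path is activated by the empty set: it contains no strict collider. -/
def ActiveEmpty (Gs : SCG d) {n : ℕ} (p : MPath (Fin d) Gs.dir Gs.bi n) : Prop :=
  ∀ (i : ℕ) (h1 : 0 < i) (h2 : i < n), ¬ Gs.StrictCollider p i h1 h2

/-- The SCG back-door path `p` is blocked by `{X}`: it contains a strict collider `C`
with `X ∉ Desc(C, Gs)`, or it contains `X` as a strict non-collider together with a
directed edge from `X` to a vertex on the path that does not form a directed cycle
with `X`. -/
def BlockedByOne (Gs : SCG d) {n : ℕ} (p : MPath (Fin d) Gs.dir Gs.bi n)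
    (X : Fin d) : Prop :=
  (∃ (i : ℕ) (h1 : 0 < i) (h2 : i < n),
    Gs.StrictCollider p i h1 h2 ∧
      ¬ Relation.ReflTransGen Gs.dir (p.v ⟨i, by omega⟩) X) ∨
  (∃ (i : ℕ) (h1 : 0 < i) (h2 : i < n),
    p.v ⟨i, by omega⟩ = X ∧ Gs.StrictNonCollider p i h1 h2 ∧
      ∃ j : Fin (n + 1), Gs.dir X (p.v j) ∧ ¬ Relation.ReflTransGen Gs.dir (p.v j) X)

/-- Condition 1 of the SCG-front-door criterion:
`Ws` intercepts every directed path from `X` to `Y` in `Gs`. -/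
def Cond1 (Gs : SCG d) (X Y : Fin d) (Ws : Set (Fin d)) : Prop :=
  ∀ (n : ℕ) (p : MPath (Fin d) Gs.dir Gs.bi n),
    p.IsDirected → p.v 0 = X → p.v (Fin.last n) = Y → ∃ i, p.v i ∈ Ws

/-- Condition 2 of the SCG-front-door criterion:
no back-door path from `X` to a vertex of `Ws` in `Gs` is activated by the empty set. -/
def Cond2 (Gs : SCG d) (X : Fin d) (Ws : Set (Fin d)) : Prop :=
  ∀ (n : ℕ) (hn : 0 < n) (p : MPath (Fin d) Gs.dir Gs.bi n),
    p.v 0 = X → p.v (Fin.last n) ∈ Ws → Gs.BackdoorStart p hn → ¬ Gs.ActiveEmpty p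

/-- Condition 3 of the SCG-front-door criterion:
every back-door path from a vertex of `Ws` to `Y` in `Gs` is blocked by `{X}`. -/
def Cond3 (Gs : SCG d) (X Y : Fin d) (Ws : Set (Fin d)) : Prop :=
  ∀ (n : ℕ) (hn : 0 < n) (p : MPath (Fin d) Gs.dir Gs.bi n),
    p.v 0 ∈ Ws → p.v (Fin.last n) = Y → Gs.BackdoorStart p hn → Gs.BlockedByOne p X

/-- Conditions 1–3 of the SCG-front-door criterion relative to `(X_{t-γ}, Y_t)`. -/
def FrontDoor123 (Gs : SCG d) (X Y : Fin d) (Ws : Set (Fin d)) : Prop :=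
  Gs.Cond1 X Y Ws ∧ Gs.Cond2 X Ws ∧ Gs.Cond3 X Y Ws

end SCG

/-- The micro-vertex set `F = {W_{t-γ+ℓ} : W ∈ Ws, 0 ≤ ℓ ≤ γ}`. -/
def Fset {d : ℕ} (Ws : Set (Fin d)) (t : ℤ) (γ : ℕ) : Set (Fin d × ℤ) :=
  {a | a.1 ∈ Ws ∧ ∃ ℓ : ℤ, 0 ≤ ℓ ∧ ℓ ≤ (γ : ℤ) ∧ a.2 = t - (γ : ℤ) + ℓ}


lemma getLast?_of_suffix {V : Type*} {l m : List V} (h : m <:+ l) (hm : m ≠ []) :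
    l.getLast? = m.getLast? := by
  obtain ⟨pre, rfl⟩ := h
  rw [List.getLast?_append, List.getLast?_eq_getLast hm]
  rfl

lemma getLast?_cons_ne {V : Type*} (x : V) {m : List V} (hm : m ≠ []) :
    (x :: m).getLast? = m.getLast? :=
  getLast?_of_suffix (List.suffix_cons x m) hm

lemma walk_to_path {V : Type*} {r : V → V → Prop} :
    ∀ (N : ℕ) (l : List V), l.length ≤ N → l.Chain' r → l ≠ [] →
    ∃ m : List V, m.Chain' r ∧ m.Nodup ∧ m ≠ [] ∧ m.head? = l.head? ∧
      m.getLast? = l.getLast? ∧ ∀ v ∈ m, v ∈ l := by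
  intro N
  induction N with
  | zero => intro l hl _ hne; exact absurd (List.eq_nil_of_length_eq_zero (Nat.le_zero.mp hl)) hne
  | succ N ih =>
    intro l hl hchain hne
    match l, hne with
    | x :: rest, _ =>
      by_cases hx : x ∈ rest
      · obtain ⟨r1, r2, hr⟩ := List.append_of_mem hx
        have hsuf : (x :: r2) <:+ x :: rest := by
          rw [hr]
          exact (List.suffix_append r1 (x :: r2)).trans (List.suffix_cons x _)
        have hlenr : rest.length = r1.length + r2.length + 1 := by
          rw [hr]; simp; omega
        have hlen' : (x :: r2).length ≤ N := by
          simp only [List.length_cons] at hl ⊢; omega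
        obtain ⟨m, hc, hnd, hmne, hh, hlast, hsub⟩ :=
          ih (x :: r2) hlen' (hchain.suffix hsuf) (List.cons_ne_nil _ _)
        refine ⟨m, hc, hnd, hmne, ?_, ?_, fun v hv => hsuf.subset (hsub v hv)⟩
        · rw [hh]; rfl
        · rw [hlast, getLast?_of_suffix hsuf (List.cons_ne_nil _ _)]
      · rcases eq_or_ne rest [] with hrest | hrest
        · subst hrest
          exact ⟨[x], List.isChain_singleton x, List.nodup_singleton x,
            List.cons_ne_nil _ _, rfl, rfl, fun v hv => hv⟩
        · have hlen' : rest.length ≤ N := by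
            simp only [List.length_cons] at hl; omega
          obtain ⟨m, hc, hnd, hmne, hh, hlast, hsub⟩ :=
            ih rest hlen' (List.isChain_cons.mp hchain).2 hrest
          refine ⟨x :: m, ?_, ?_, List.cons_ne_nil _ _, rfl, ?_, ?_⟩
          · refine List.isChain_cons.mpr ⟨fun y hy => ?_, hc⟩
            exact (List.isChain_cons.mp hchain).1 y (hh ▸ hy)
          · exact List.nodup_cons.mpr ⟨fun hxm => hx (hsub x hxm), hnd⟩
          · rw [getLast?_cons_ne x hmne, getLast?_cons_ne x hrest, hlast]
          · intro v hv
            rcases List.mem_cons.mp hv with h | h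
            · exact h ▸ List.mem_cons_self (a := x) (l := rest)
            · exact List.mem_cons_of_mem x (hsub v h)

lemma meet {V : Type*} {r : V → V → Prop} :
    ∀ (N : ℕ) (P Q : List V), P.length ≤ N → P.Chain' r → Q.Chain' r →
      P.Nodup → Q.Nodup → P ≠ [] →
      (∀ x, P.head? = some x → x ∈ Q) →
    ∃ (P₂ Q₂ : List V) (c : V), P₂.Chain' r ∧ Q₂.Chain' r ∧ P₂.Nodup ∧ Q₂.Nodup ∧
      P₂.head? = some c ∧ Q₂.head? = some c ∧
      P₂.getLast? = P.getLast? ∧ Q₂.getLast? = Q.getLast? ∧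
      (∀ v ∈ P₂.tail, v ∉ Q₂) ∧ (∀ v ∈ P₂, v ∈ P) ∧ (∀ v ∈ Q₂, v ∈ Q) := by
  intro N
  induction N with
  | zero => intro P Q hl _ _ _ _ hne _; exact absurd (List.eq_nil_of_length_eq_zero (Nat.le_zero.mp hl)) hne
  | succ N ih =>
    intro P Q hl hcP hcQ hndP hndQ hne hhead
    match P, hne with
    | x :: P', _ =>
      have hm : x ∈ Q := hhead x rfl
      by_cases hint : ∃ v ∈ P', v ∈ Q
      · obtain ⟨v, hv1, hv2⟩ := hint
        obtain ⟨s, t, hst⟩ := List.append_of_mem hv1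
        have hsuf : (v :: t) <:+ x :: P' := by
          rw [hst]
          exact (List.suffix_append s (v :: t)).trans (List.suffix_cons x _)
        have hlen' : (v :: t).length ≤ N := by
          have : P'.length = s.length + t.length + 1 := by rw [hst]; simp; omega
          simp only [List.length_cons] at hl ⊢; omega
        obtain ⟨P₂, Q₂, c, h1, h2, h3, h4, h5, h6, h7, h8, h9, h10, h11⟩ :=
          ih (v :: t) Q hlen' (hcP.suffix hsuf) hcQ (hndP.sublist hsuf.sublist)
            hndQ (List.cons_ne_nil _ _)
            (fun y hy => by simp at hy; exact hy ▸ hv2)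
        exact ⟨P₂, Q₂, c, h1, h2, h3, h4, h5, h6,
          h7.trans (getLast?_of_suffix hsuf (List.cons_ne_nil _ _)).symm, h8, h9,
          fun w hw => hsuf.subset (h10 w hw), h11⟩
      · obtain ⟨s, t, hst⟩ := List.append_of_mem hm
        have hsufQ : (x :: t) <:+ Q := by
          rw [hst]; exact List.suffix_append s (x :: t)
        refine ⟨x :: P', x :: t, x, hcP, hcQ.suffix hsufQ, hndP,
          hndQ.sublist hsufQ.sublist, rfl, rfl, rfl,
          (getLast?_of_suffix hsufQ (List.cons_ne_nil _ _)).symm, ?_,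
          fun v hv => hv, fun v hv => hsufQ.subset hv⟩
        intro v hv hvQ₂
        exact hint ⟨v, hv, hsufQ.subset hvQ₂⟩

lemma build_contra {d : ℕ} (Gs : SCG d) (W Y X : Fin d)
    (hbd : ∀ (n : ℕ) (hn : 0 < n) (q : MPath (Fin d) Gs.dir Gs.bi n),
      q.v 0 = W → q.v (Fin.last n) = Y → Gs.BackdoorStart q hn →
      Gs.BlockedByOne q X)
    (L : List (Fin d)) (a : ℕ) (ε : Bool)
    (hlen : 2 ≤ L.length)
    (ha : a + (if ε then 1 else 0) ≤ L.length - 1)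
    (hfirst : 1 ≤ a + (if ε then 1 else 0))
    (hnd : L.Nodup)
    (hW : L.head? = some W) (hY : L.getLast? = some Y)
    (hX : X ∉ L)
    (hdirL : ∀ k (h : k + 1 < L.length), k < a → Gs.dir (L[k+1]'h) (L[k]'(by omega)))
    (hbidE : ∀ (h : a + 1 < L.length), ε = true → Gs.bi (L[a]'(by omega)) (L[a+1]'h))
    (hdirR : ∀ k (h : k + 1 < L.length), a + (if ε then 1 else 0) ≤ k →
      Gs.dir (L[k]'(by omega)) (L[k+1]'h)) :
    False := by
  set n := L.length - 1 with hn_def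
  have hn : 0 < n := by omega
  have hvb : ∀ i : Fin (n+1), (i : ℕ) < L.length := fun i => by
    have := i.isLt; omega
  have heb : ∀ k : Fin n, (k : ℕ) + 1 < L.length := fun k => by
    have := k.isLt; omega
  set vfun : Fin (n+1) → Fin d := fun i => L[(i:ℕ)]'(hvb i) with hv_def
  set efun : Fin n → EdgeT :=
    fun k => if (k:ℕ) < a then .bwd else if ε = true ∧ (k:ℕ) = a then .bid else .fwd
    with he_def
  have ef_bwd : ∀ k : Fin n, efun k = .bwd ↔ (k:ℕ) < a := by
    intro k
    simp only [he_def]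
    split_ifs with h1 h2 <;> simp_all
  have ef_fwd : ∀ k : Fin n, efun k = .fwd ↔ a + (if ε then 1 else 0) ≤ (k:ℕ) := by
    intro k
    have hk := k.isLt
    simp only [he_def]
    split_ifs with h1 h2 <;> cases ε <;> simp_all <;> omega
  have ef_bid : ∀ k : Fin n, efun k = .bid ↔ (ε = true ∧ (k:ℕ) = a) := by
    intro k
    simp only [he_def]
    split_ifs with h1 h2 <;> cases ε <;> simp_all <;> omega
  let q : MPath (Fin d) Gs.dir Gs.bi n := {
    v := vfun
    e := efun
    inj := by
      intro i j hij
      have hinj := List.nodup_iff_injective_get.mp hnd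
      have : L.get ⟨(i:ℕ), hvb i⟩ = L.get ⟨(j:ℕ), hvb j⟩ := by
        simpa [List.get_eq_getElem, hv_def] using hij
      have := hinj this
      exact Fin.ext (by simpa using congrArg Fin.val this)
    valid_fwd := by
      intro k hk
      have hle := (ef_fwd k).mp hk
      simp only [hv_def, Fin.coe_castSucc, Fin.val_succ]
      exact hdirR (k:ℕ) (heb k) hle
    valid_bwd := by
      intro k hk
      simp only [hv_def, Fin.coe_castSucc, Fin.val_succ]
      exact hdirL (k:ℕ) (heb k) ((ef_bwd k).mp hk)
    valid_bid := by
      intro k hk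
      obtain ⟨hε, hka⟩ := (ef_bid k).mp hk
      have hb : a + 1 < L.length := by have := heb k; omega
      have hbi := hbidE hb hε
      simp only [hv_def, Fin.coe_castSucc, Fin.val_succ, hka]
      exact hbi
  }
  have hq0 : q.v 0 = W := by
    show vfun 0 = W
    have h0 : L.head? = some (L[0]'(by omega)) := by
      rw [List.head?_eq_getElem?]
      exact (List.getElem?_eq_getElem _).symm ▸ rfl
    rw [hW] at h0
    simpa [hv_def] using (Option.some_injective _ h0).symm
  have hqY : q.v (Fin.last n) = Y := by
    show vfun (Fin.last n) = Y
    have h0 : L.getLast? = some (L[L.length - 1]'(by omega)) := by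
      rw [List.getLast?_eq_getElem?]
      exact (List.getElem?_eq_getElem _).symm ▸ rfl
    rw [hY] at h0
    have h1 := (Option.some_injective _ h0).symm
    simp only [hv_def, Fin.val_last]
    exact h1
  have hback : Gs.BackdoorStart q hn := by
    unfold SCG.BackdoorStart
    rcases Nat.lt_or_ge 0 a with h0a | h0a
    · left; exact (ef_bwd ⟨0, hn⟩).mpr h0a
    · right; left
      have hε : ε = true := by cases ε <;> simp_all
      exact (ef_bid ⟨0, hn⟩).mpr ⟨hε, by simp only [Fin.val_mk]; omega⟩
  have hbl := hbd n hn q hq0 hqY hback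
  rcases hbl with ⟨i, h1, h2, hsc, _⟩ | ⟨i, h1, h2, hXi, _⟩
  · obtain ⟨hf, hb, _, _⟩ := hsc
    have hia : i < a := (ef_bwd ⟨i, h2⟩).mp hb
    have hf2 := (ef_fwd ⟨i - 1, by omega⟩).mp hf
    have hf3 : a ≤ ((⟨i - 1, by omega⟩ : Fin n) : ℕ) := le_trans (by cases ε <;> simp) hf2
    simp only [Fin.val_mk] at hf3
    omega
  · apply hX
    rw [← hXi]
    exact List.getElem_mem _

lemma chain'_getElem {V : Type*} {r : V → V → Prop} {l : List V} (h : l.Chain' r)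
    (i : ℕ) (hi : i + 1 < l.length) : r (l[i]'(by omega)) (l[i+1]'hi) := by
  simpa [List.get_eq_getElem] using List.isChain_iff_getElem.mp h i (by omega)

lemma getElem_congr' {V : Type*} (l : List V) {i j : ℕ} (hi : i < l.length)
    (hj : j < l.length) (h : i = j) : l[i]'hi = l[j]'hj := by subst h; rfl

lemma head?_getElem {V : Type*} {l : List V} {x : V} (h : l.head? = some x)
    (h0 : 0 < l.length) : l[0]'h0 = x := by
  rw [List.head?_eq_getElem?, List.getElem?_eq_getElem h0] at h
  exact Option.some_injective _ h

lemma getLast?_getElem {V : Type*} {l : List V} {x : V} (h : l.getLast? = some x)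
    (h0 : 0 < l.length) : l[l.length - 1]'(by omega) = x := by
  rw [List.getLast?_eq_getElem?, List.getElem?_eq_getElem (by omega)] at h
  exact Option.some_injective _ h

lemma two_le_length {V : Type*} {l : List V} {x y : V} (hx : l.head? = some x)
    (hy : l.getLast? = some y) (h : x ≠ y) : 2 ≤ l.length := by
  match l with
  | [] => simp at hx
  | [z] => simp at hx hy; exact absurd (hx.symm.trans hy) h
  | z :: w :: t => simp only [List.length]; omega

lemma glue_contra {d : ℕ} (Gs : SCG d) (W Y X : Fin d)
    (hbd : ∀ (n : ℕ) (hn : 0 < n) (q : MPath (Fin d) Gs.dir Gs.bi n),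
      q.v 0 = W → q.v (Fin.last n) = Y → Gs.BackdoorStart q hn →
      Gs.BlockedByOne q X)
    (P Q : List (Fin d))
    (hcP : P.Chain' Gs.dir) (hcQ : Q.Chain' Gs.dir) (hndP : P.Nodup) (hndQ : Q.Nodup)
    (hPne : P ≠ []) (hQne : Q ≠ [])
    (hPl : P.getLast? = some W) (hQl : Q.getLast? = some Y)
    (hhead : ∀ x, P.head? = some x → x ∈ Q)
    (hWQ : W ∉ Q) (hXP : X ∉ P) (hXQ : X ∉ Q) : False := by
  obtain ⟨P₂, Q₂, c, hc1, hc2, hn1, hn2, hh1, hh2, hl1, hl2, hdis, hs1, hs2⟩ :=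
    meet P.length P Q le_rfl hcP hcQ hndP hndQ hPne hhead
  rw [hPl] at hl1
  rw [hQl] at hl2
  have hcQ₂ : c ∈ Q₂ := by
    have : 0 < Q₂.length := by cases Q₂ <;> simp_all
    rw [← head?_getElem hh2 this]
    exact List.getElem_mem _
  have hcW : c ≠ W := fun h => hWQ (h ▸ hs2 c hcQ₂)
  have hpl2 : 2 ≤ P₂.length := two_le_length hh1 hl1 hcW
  obtain ⟨Qt, rfl⟩ : ∃ Qt, Q₂ = c :: Qt := by
    match Q₂, hh2 with
    | z :: t, hh2 => exact ⟨t, by simp at hh2; rw [hh2]⟩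
  have hrevlen : P₂.reverse.length = P₂.length := by simp
  have hLlen : (P₂.reverse ++ Qt).length = P₂.length + Qt.length := by simp
  have hgetP : ∀ k (hk : k < P₂.length) (h : k < (P₂.reverse ++ Qt).length),
      (P₂.reverse ++ Qt)[k]'h = P₂[P₂.length - 1 - k]'(by omega) := by
    intro k hk h
    rw [List.getElem_append_left (by omega)]
    exact List.getElem_reverse _
  have hgetQ : ∀ j (hj : j < Qt.length + 1) (h : P₂.length - 1 + j < (P₂.reverse ++ Qt).length),
      (P₂.reverse ++ Qt)[P₂.length - 1 + j]'h = (c :: Qt)[j]'(by simpa using hj) := by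
    intro j hj h
    rcases Nat.eq_zero_or_pos j with rfl | hjpos
    · rw [hgetP (P₂.length - 1 + 0) (by omega) h]
      have h1 : P₂[P₂.length - 1 - (P₂.length - 1 + 0)]'(by omega) = P₂[0]'(by omega) :=
        getElem_congr' _ (by omega) (by omega) (by omega)
      rw [h1, head?_getElem hh1 (by omega)]
      rfl
    · rw [List.getElem_append_right (by omega)]
      have h2 : (c :: Qt)[j]'(by simpa using hj) = Qt[j-1]'(by omega) := by
        rcases Nat.exists_eq_add_of_le hjpos with ⟨j', rfl⟩
        simp [Nat.add_comm 1 j']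
      rw [h2]
      exact getElem_congr' _ (by omega) (by omega) (by omega)
  apply build_contra Gs W Y X hbd (P₂.reverse ++ Qt) (P₂.length - 1) false
  · omega
  · simp only [if_neg (Bool.false_ne_true)]; omega
  · simp only [if_neg (Bool.false_ne_true)]; omega
  · refine List.Nodup.append (List.nodup_reverse.mpr hn1)
      (hn2.sublist (List.sublist_cons_self c Qt)) ?_
    intro v hv hvQt
    have hvP : v ∈ P₂ := List.mem_reverse.mp hv
    have hvQ₂ : v ∈ c :: Qt := List.mem_cons_of_mem c hvQt
    obtain ⟨Pt, rfl⟩ : ∃ Pt, P₂ = c :: Pt := by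
      match P₂, hh1 with
      | z :: t, hh1 => exact ⟨t, by simp at hh1; rw [hh1]⟩
    rcases List.mem_cons.mp hvP with rfl | hvt
    · exact (List.nodup_cons.mp hn2).1 hvQt
    · exact hdis v hvt hvQ₂
  · rw [List.head?_append]
    have h3 : P₂.reverse.head? = some W := by rw [List.head?_reverse]; exact hl1
    rw [h3]; rfl
  · rcases eq_or_ne Qt [] with rfl | hQtne
    · have : Y = c := by simpa using hl2.symm
      subst this
      simp only [List.append_nil]
      rw [List.getLast?_reverse]
      exact hh1
    · rw [List.getLast?_append, List.getLast?_eq_getLast hQtne, Option.or]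
      have h4 : (c :: Qt).getLast? = some (Qt.getLast hQtne) := by
        rw [getLast?_cons_ne c hQtne, List.getLast?_eq_getLast hQtne]
      rw [h4] at hl2
      exact hl2
  · intro hX
    rcases List.mem_append.mp hX with h | h
    · exact hXP (hs1 X (List.mem_reverse.mp h))
    · exact hXQ (hs2 X (List.mem_cons_of_mem c h))
  · intro k h hk
    rw [hgetP k (by omega) (by omega), hgetP (k+1) (by omega) h]
    have h5 := chain'_getElem hc1 (P₂.length - 1 - (k+1)) (by omega)
    have he : P₂[P₂.length - 1 - (k+1) + 1]'(by omega) = P₂[P₂.length - 1 - k]'(by omega) :=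
      getElem_congr' _ (by omega) (by omega) (by omega)
    rw [he] at h5
    exact h5
  · intro _ h
    simp at h
  · intro k h hk
    simp only [if_neg (Bool.false_ne_true), Nat.add_zero] at hk
    have hj : k = P₂.length - 1 + (k - (P₂.length - 1)) := by omega
    have hj1 : k + 1 = P₂.length - 1 + (k - (P₂.length - 1) + 1) := by omega
    have hb1 : k - (P₂.length - 1) < Qt.length + 1 := by omega
    have hb2 : k - (P₂.length - 1) + 1 < Qt.length + 1 := by omega
    have hk1 : (P₂.reverse ++ Qt)[k]'(by omega) = (c :: Qt)[k - (P₂.length - 1)]'(by simpa using hb1) := by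
      rw [getElem_congr' (P₂.reverse ++ Qt) (by omega) (by omega) hj]
      exact hgetQ _ hb1 _
    have hk2 : (P₂.reverse ++ Qt)[k+1]'h = (c :: Qt)[k - (P₂.length - 1) + 1]'(by simpa using hb2) := by
      rw [getElem_congr' (P₂.reverse ++ Qt) h (by omega) hj1]
      exact hgetQ _ hb2 _
    rw [hk1, hk2]
    exact chain'_getElem hc2 _ (by simpa using hb2)

lemma bid_contra {d : ℕ} (Gs : SCG d) (W Y X : Fin d)
    (hbd : ∀ (n : ℕ) (hn : 0 < n) (q : MPath (Fin d) Gs.dir Gs.bi n),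
      q.v 0 = W → q.v (Fin.last n) = Y → Gs.BackdoorStart q hn →
      Gs.BlockedByOne q X)
    (P Q : List (Fin d))
    (hcP : P.Chain' Gs.dir) (hcQ : Q.Chain' Gs.dir) (hndP : P.Nodup) (hndQ : Q.Nodup)
    (hPne : P ≠ []) (hQne : Q ≠ [])
    (hPl : P.getLast? = some W) (hQl : Q.getLast? = some Y)
    (hbi : ∀ x y, P.head? = some x → Q.head? = some y → Gs.bi x y)
    (hdisj : ∀ v ∈ P, v ∉ Q)
    (hXP : X ∉ P) (hXQ : X ∉ Q) : False := by
  have hPlp : 0 < P.length := List.length_pos_iff.mpr hPne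
  have hrevlen : P.reverse.length = P.length := by simp
  have hQlp : 0 < Q.length := List.length_pos_iff.mpr hQne
  have hLlen : (P.reverse ++ Q).length = P.length + Q.length := by simp
  have hgetP : ∀ k (hk : k < P.length) (h : k < (P.reverse ++ Q).length),
      (P.reverse ++ Q)[k]'h = P[P.length - 1 - k]'(by omega) := by
    intro k hk h
    rw [List.getElem_append_left (by omega)]
    exact List.getElem_reverse _
  have hgetQ : ∀ j (hj : j < Q.length) (h : P.length + j < (P.reverse ++ Q).length),
      (P.reverse ++ Q)[P.length + j]'h = Q[j]'hj := by
    intro j hj h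
    rw [List.getElem_append_right (by omega)]
    exact getElem_congr' _ (by omega) (by omega) (by omega)
  apply build_contra Gs W Y X hbd (P.reverse ++ Q) (P.length - 1) true
  · omega
  · simp only [reduceIte]; omega
  · simp only [reduceIte]; omega
  · exact List.Nodup.append (List.nodup_reverse.mpr hndP) hndQ
      (fun v hv => hdisj v (List.mem_reverse.mp hv))
  · rw [List.head?_append]
    have h3 : P.reverse.head? = some W := by rw [List.head?_reverse]; exact hPl
    rw [h3]; rfl
  · rw [List.getLast?_append, List.getLast?_eq_getLast hQne, Option.or]
    rw [List.getLast?_eq_getLast hQne] at hQl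
    exact hQl
  · intro hX
    rcases List.mem_append.mp hX with h | h
    · exact hXP (List.mem_reverse.mp h)
    · exact hXQ h
  · intro k h hk
    rw [hgetP k (by omega) (by omega), hgetP (k+1) (by omega) h]
    have h5 := chain'_getElem hcP (P.length - 1 - (k+1)) (by omega)
    have he : P[P.length - 1 - (k+1) + 1]'(by omega) = P[P.length - 1 - k]'(by omega) :=
      getElem_congr' _ (by omega) (by omega) (by omega)
    rw [he] at h5
    exact h5
  · intro h _
    have h1 : (P.reverse ++ Q)[P.length - 1]'(by omega) = P[0]'hPlp := by
      rw [hgetP (P.length - 1) (by omega) (by omega)]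
      exact getElem_congr' _ (by omega) (by omega) (by omega)
    have h2 : (P.reverse ++ Q)[P.length - 1 + 1]'h = Q[0]'hQlp := by
      rw [getElem_congr' (P.reverse ++ Q) h (by omega) (by omega : P.length - 1 + 1 = P.length + 0)]
      exact hgetQ 0 hQlp (by omega)
    rw [h1, h2]
    apply hbi
    · rw [List.head?_eq_getElem?, List.getElem?_eq_getElem hPlp]
    · rw [List.head?_eq_getElem?, List.getElem?_eq_getElem hQlp]
  · intro k h hk
    simp only [reduceIte] at hk
    have hj : k = P.length + (k - P.length) := by omega
    have hj1 : k + 1 = P.length + (k - P.length + 1) := by omega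
    have hb1 : k - P.length < Q.length := by omega
    have hb2 : k - P.length + 1 < Q.length := by omega
    have hk1 : (P.reverse ++ Q)[k]'(by omega) = Q[k - P.length]'hb1 := by
      rw [getElem_congr' (P.reverse ++ Q) (by omega) (by omega) hj]
      exact hgetQ _ hb1 _
    have hk2 : (P.reverse ++ Q)[k+1]'h = Q[k - P.length + 1]'hb2 := by
      rw [getElem_congr' (P.reverse ++ Q) h (by omega) hj1]
      exact hgetQ _ hb2 _
    rw [hk1, hk2]
    exact chain'_getElem hcQ _ hb2

lemma combine_contra {d : ℕ} (Gs : SCG d) (W Y X : Fin d)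
    (hbd : ∀ (n : ℕ) (hn : 0 < n) (q : MPath (Fin d) Gs.dir Gs.bi n),
      q.v 0 = W → q.v (Fin.last n) = Y → Gs.BackdoorStart q hn →
      Gs.BlockedByOne q X)
    (uL uQ : List (Fin d)) (ε : Bool)
    (hcL : uL.Chain' Gs.dir) (hcQ : uQ.Chain' Gs.dir)
    (hLne : uL ≠ []) (hQne : uQ ≠ [])
    (hlastL : uL.getLast? = some W) (hlastQ : uQ.getLast? = some Y)
    (hconn : if ε then (∀ mm mm', uL.head? = some mm → uQ.head? = some mm' → Gs.bi mm mm')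
      else uL.head? = uQ.head?)
    (hWQ : W ∉ uQ)
    (hXL : X ∉ uL) (hXQ : X ∉ uQ) : False := by
  obtain ⟨P, hcP, hndP, hPne, hPh, hPl, hPsub⟩ :=
    walk_to_path uL.length uL le_rfl hcL hLne
  obtain ⟨Q, hcQ', hndQ, hQne', hQh, hQl, hQsub⟩ :=
    walk_to_path uQ.length uQ le_rfl hcQ hQne
  have hWQ' : W ∉ Q := fun h => hWQ (hQsub W h)
  have hXP' : X ∉ P := fun h => hXL (hPsub X h)
  have hXQ' : X ∉ Q := fun h => hXQ (hQsub X h)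
  cases ε with
  | false =>
    simp only [if_neg (Bool.false_ne_true)] at hconn
    refine glue_contra Gs W Y X hbd P Q hcP hcQ' hndP hndQ hPne hQne'
      (hPl.trans hlastL) (hQl.trans hlastQ) ?_ hWQ' hXP' hXQ'
    intro x hx
    have : Q.head? = some x := by rw [hQh, ← hconn, ← hPh, hx]
    exact List.mem_of_mem_head? this
  | true =>
    simp only [if_pos rfl] at hconn
    by_cases hdisj : ∀ v ∈ P, v ∉ Q
    · exact bid_contra Gs W Y X hbd P Q hcP hcQ' hndP hndQ hPne hQne'
        (hPl.trans hlastL) (hQl.trans hlastQ)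
        (fun x y hx hy => hconn x y (hPh ▸ hx) (hQh ▸ hy)) hdisj hXP' hXQ'
    · push_neg at hdisj
      obtain ⟨v, hvP, hvQ⟩ := hdisj
      obtain ⟨s, t, hst⟩ := List.append_of_mem hvP
      have hsuf : (v :: t) <:+ P := by rw [hst]; exact List.suffix_append s (v :: t)
      refine glue_contra Gs W Y X hbd (v :: t) Q (hcP.suffix hsuf) hcQ'
        (hndP.sublist hsuf.sublist) hndQ (List.cons_ne_nil _ _) hQne'
        ?_ (hQl.trans hlastQ) ?_ hWQ' (fun h => hXP' (hsuf.subset h)) hXQ'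
      · rw [← getLast?_of_suffix hsuf (List.cons_ne_nil _ _)]
        exact hPl.trans hlastL
      · intro x hx
        simp at hx
        exact hx ▸ hvQ

lemma ofFn_chain'' {V : Type*} {r : V → V → Prop} {m : ℕ} (f : Fin m → V)
    (hf : ∀ k (hk : k + 1 < m), r (f ⟨k, by omega⟩) (f ⟨k+1, hk⟩)) :
    (List.ofFn f).Chain' r := by
  refine List.isChain_iff_getElem.mpr ?_
  intro i h
  simp only [List.length_ofFn] at h
  simp only [List.get_eq_getElem, List.getElem_ofFn]
  exact hf i (by omega)

lemma ofFn_ne_nil {V : Type*} {m : ℕ} (f : Fin m → V) (h : 0 < m) :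
    List.ofFn f ≠ [] := by
  intro he
  have := congrArg List.length he
  simp at this
  omega

lemma ofFn_head?' {V : Type*} {m : ℕ} (f : Fin m → V) (h : 0 < m) :
    (List.ofFn f).head? = some (f ⟨0, h⟩) := by
  rw [List.head?_eq_getElem?, List.getElem?_eq_getElem (by simpa using h)]
  simp only [List.getElem_ofFn]

lemma ofFn_getLast?' {V : Type*} {m : ℕ} (f : Fin m → V) (h : 0 < m) :
    (List.ofFn f).getLast? = some (f ⟨m - 1, by omega⟩) := by
  rw [List.getLast?_eq_getElem?, List.getElem?_eq_getElem (by simp; omega)]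
  simp only [List.getElem_ofFn, List.length_ofFn]

lemma mem_ofFn' {V : Type*} {m : ℕ} (f : Fin m → V) {x : V} (h : x ∈ List.ofFn f) :
    ∃ i, f i = x := by
  rw [List.mem_ofFn] at h
  exact h

theorem property2' {d : ℕ} {t0 tmax : ℤ} {γmax : ℕ}
    (Gs : SCG d) (W Y X : Fin d) (hWY : W ≠ Y)
    (hbd : ∀ (n : ℕ) (hn : 0 < n) (q : MPath (Fin d) Gs.dir Gs.bi n),
      q.v 0 = W → q.v (Fin.last n) = Y → Gs.BackdoorStart q hn →
      Gs.BlockedByOne q X) :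
    ∀ G : FTADMG d t0 tmax γmax, IsCandidate Gs G →
      ∀ (s1 s2 : ℤ) (n : ℕ) (hn : 0 < n) (p : MPath (Fin d × ℤ) G.dir G.bi n),
        p.v 0 = (W, s1) → p.v (Fin.last n) = (Y, s2) →
        (p.e ⟨0, hn⟩).headLeft → p.ColliderFree →
        ∃ i : Fin (n + 1), (p.v i).1 = X ∨ ((p.v i).1 = W ∧ (p.v i).2 ≠ s1) := by
  intro G hc s1 s2 n hn p h0 hlast hstart hcf
  by_contra hcon
  push_neg at hcon
  have macro_dir : ∀ x y : Fin d × ℤ, G.dir x y → Gs.dir x.1 y.1 := by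
    intro x y h
    exact (hc.1 x.1 y.1).mpr ⟨x.2, y.2, by simpa using h⟩
  have macro_bi : ∀ x y : Fin d × ℤ, G.bi x y → Gs.bi x.1 y.1 := by
    intro x y h
    exact (hc.2 x.1 y.1).mpr ⟨x.2, y.2, by simpa using h⟩
  set mfun : Fin (n+1) → Fin d := fun i => (p.v i).1 with hm_def
  have mcongr : ∀ (x y : ℕ) (hx : x < n+1) (hy : y < n+1), x = y →
      mfun ⟨x,hx⟩ = mfun ⟨y,hy⟩ := by
    intro x y hx hy h; subst h; rfl
  have hXm : ∀ i, mfun i ≠ X := fun i => (hcon i).1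
  have hW0 : mfun 0 = W := by rw [hm_def]; simp [h0]
  have hYl : mfun (Fin.last n) = Y := by rw [hm_def]; simp [hlast]
  have hXY : X ≠ Y := fun h => hXm (Fin.last n) (by rw [hYl, h])
  have hWuniq : ∀ i : Fin (n+1), mfun i = W → (i : ℕ) = 0 := by
    intro i hwi
    have h2 := (hcon i).2 hwi
    have h3 : p.v i = p.v 0 := by
      rw [h0]; exact Prod.ext_iff.mpr ⟨hwi, h2⟩
    have := p.inj h3
    simpa using congrArg Fin.val this
  have hbwdM : ∀ (k : ℕ) (h : k < n), p.e ⟨k,h⟩ = .bwd →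
      Gs.dir (mfun ⟨k+1, by omega⟩) (mfun ⟨k, by omega⟩) := by
    intro k h hk
    have h1 := macro_dir _ _ (p.valid_bwd ⟨k,h⟩ hk)
    simpa [hm_def, Fin.succ_mk, Fin.castSucc_mk] using h1
  have hfwdM : ∀ (k : ℕ) (h : k < n), p.e ⟨k,h⟩ = .fwd →
      Gs.dir (mfun ⟨k, by omega⟩) (mfun ⟨k+1, by omega⟩) := by
    intro k h hk
    have h1 := macro_dir _ _ (p.valid_fwd ⟨k,h⟩ hk)
    simpa [hm_def, Fin.succ_mk, Fin.castSucc_mk] using h1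
  have hbidM : ∀ (k : ℕ) (h : k < n), p.e ⟨k,h⟩ = .bid →
      Gs.bi (mfun ⟨k, by omega⟩) (mfun ⟨k+1, by omega⟩) := by
    intro k h hk
    have h1 := macro_bi _ _ (p.valid_bid ⟨k,h⟩ hk)
    simpa [hm_def, Fin.succ_mk, Fin.castSucc_mk] using h1
  by_cases hall : ∀ k : Fin n, p.e k = .bwd
  · -- all edges backward: reversed directed path from Y to W
    refine combine_contra Gs W Y X hbd
      (List.ofFn (fun i : Fin (n+1) => mfun ⟨n - (i:ℕ), by omega⟩)) [Y] false
      ?_ (List.isChain_singleton Y) (ofFn_ne_nil _ (by omega)) (List.cons_ne_nil _ _)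
      ?_ rfl ?_ ?_ ?_ ?_
    · refine ofFn_chain'' _ ?_
      intro k hk
      simp only []
      have h1 := hbwdM (n - k - 1) (by omega) (hall _)
      have e1 : mfun ⟨n - k, by omega⟩ = mfun ⟨n - k - 1 + 1, by omega⟩ :=
        mcongr _ _ _ _ (by omega)
      have e2 : mfun ⟨n - (k+1), by omega⟩ = mfun ⟨n - k - 1, by omega⟩ :=
        mcongr _ _ _ _ (by omega)
      rw [e1, e2]
      exact h1
    · rw [ofFn_getLast?' _ (by omega)]
      have e1 : mfun ⟨n - (n + 1 - 1), by omega⟩ = mfun ⟨0, by omega⟩ :=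
        mcongr _ _ _ _ (by omega)
      rw [e1, Fin.mk_zero, hW0]
    · rw [ofFn_head?' _ (by omega)]
      have e1 : mfun ⟨n - ((0:ℕ)), by omega⟩ = mfun ⟨n, by omega⟩ :=
        mcongr _ _ _ _ (by omega)
      show some (mfun ⟨n - ((0:ℕ)), by omega⟩) = _
      rw [e1]
      have : mfun ⟨n, by omega⟩ = Y := hYl
      rw [this]
      rfl
    · intro h
      exact hWY (List.mem_singleton.mp h)
    · intro h
      obtain ⟨i, hi⟩ := mem_ofFn' _ h
      exact hXm _ hi
    · intro h
      exact hXY (List.mem_singleton.mp h)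
  · push_neg at hall
    obtain ⟨k0, hk0⟩ := hall
    have hex : ∃ k : ℕ, ∃ h : k < n, p.e ⟨k, h⟩ ≠ .bwd := ⟨k0, k0.isLt, by simpa using hk0⟩
    classical
    set a := Nat.find hex with ha_def
    obtain ⟨halt, hane⟩ := Nat.find_spec hex
    have hmin : ∀ k (h : k < n), k < a → p.e ⟨k, h⟩ = .bwd := by
      intro k h hk
      by_contra hne
      exact Nat.find_min hex hk ⟨h, hne⟩
    have hfwd : ∀ k (h : k < n), a < k → p.e ⟨k,h⟩ = .fwd := by
      intro k
      induction k using Nat.strong_induction_on with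
      | _ k ih =>
        intro h hak
        have hprev : (p.e ⟨k-1, by omega⟩).headRight := by
          rcases eq_or_lt_of_le (Nat.succ_le_of_lt hak) with heq | hlt
          · have hfe : (⟨k-1, by omega⟩ : Fin n) = ⟨a, halt⟩ := Fin.ext (by simp; omega)
            rw [hfe]
            cases hcase : p.e ⟨a, halt⟩ with
            | bwd => exact absurd hcase hane
            | fwd => trivial
            | bid => trivial
          · rw [ih (k-1) (by omega) (by omega) (by omega)]
            trivial
        have hnc := hcf k (by omega) h
        cases hcase : p.e ⟨k, h⟩ with
        | fwd => rfl
        | bwd => exact absurd ⟨hprev, by rw [hcase]; trivial⟩ hnc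
        | bid => exact absurd ⟨hprev, by rw [hcase]; trivial⟩ hnc
    cases hacase : p.e ⟨a, halt⟩ with
    | bwd => exact absurd hacase hane
    | fwd =>
      have ha1 : 1 ≤ a := by
        by_contra h0'
        have hfe : (⟨0, hn⟩ : Fin n) = ⟨a, halt⟩ := Fin.ext (by simp; omega)
        rw [hfe, hacase] at hstart
        exact hstart
      refine combine_contra Gs W Y X hbd
        (List.ofFn (fun i : Fin (a+1) => mfun ⟨a - (i:ℕ), by omega⟩))
        (List.ofFn (fun j : Fin (n - a + 1) => mfun ⟨a + (j:ℕ), by omega⟩)) false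
        ?_ ?_ (ofFn_ne_nil _ (by omega)) (ofFn_ne_nil _ (by omega)) ?_ ?_ ?_ ?_ ?_ ?_
      · refine ofFn_chain'' _ ?_
        intro k hk
        simp only []
        have h1 := hbwdM (a - k - 1) (by omega) (hmin _ (by omega) (by omega))
        have e1 : mfun ⟨a - k, by omega⟩ = mfun ⟨a - k - 1 + 1, by omega⟩ :=
          mcongr _ _ _ _ (by omega)
        have e2 : mfun ⟨a - (k+1), by omega⟩ = mfun ⟨a - k - 1, by omega⟩ :=
          mcongr _ _ _ _ (by omega)
        rw [e1, e2]
        exact h1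
      · refine ofFn_chain'' _ ?_
        intro j hj
        simp only []
        have hedge : p.e ⟨a + j, by omega⟩ = .fwd := by
          rcases Nat.eq_zero_or_pos j with rfl | hjp
          · have hfe : (⟨a + 0, by omega⟩ : Fin n) = ⟨a, halt⟩ := Fin.ext (by simp)
            rw [hfe]; exact hacase
          · exact hfwd (a + j) (by omega) (by omega)
        have h1 := hfwdM (a + j) (by omega) hedge
        have e2 : mfun ⟨a + (j+1), by omega⟩ = mfun ⟨a + j + 1, by omega⟩ :=
          mcongr _ _ _ _ (by omega)
        rw [e2]
        exact h1
      · rw [ofFn_getLast?' _ (by omega)]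
        have e1 : mfun ⟨a - (a + 1 - 1), by omega⟩ = mfun ⟨0, by omega⟩ :=
          mcongr _ _ _ _ (by omega)
        rw [e1, Fin.mk_zero, hW0]
      · rw [ofFn_getLast?' _ (by omega)]
        have e1 : mfun ⟨a + (n - a + 1 - 1), by omega⟩ = mfun ⟨n, by omega⟩ :=
          mcongr _ _ _ _ (by omega)
        rw [e1]
        have : mfun ⟨n, by omega⟩ = Y := hYl
        rw [this]
      · rw [ofFn_head?' _ (by omega), ofFn_head?' _ (by omega)]
        simp only []
        congr 1
      · intro h
        obtain ⟨j, hj⟩ := mem_ofFn' _ h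
        have := hWuniq _ hj
        simp at this
        omega
      · intro h
        obtain ⟨i, hi⟩ := mem_ofFn' _ h
        exact hXm _ hi
      · intro h
        obtain ⟨i, hi⟩ := mem_ofFn' _ h
        exact hXm _ hi
    | bid =>
      refine combine_contra Gs W Y X hbd
        (List.ofFn (fun i : Fin (a+1) => mfun ⟨a - (i:ℕ), by omega⟩))
        (List.ofFn (fun j : Fin (n - a) => mfun ⟨a + 1 + (j:ℕ), by omega⟩)) true
        ?_ ?_ (ofFn_ne_nil _ (by omega)) (ofFn_ne_nil _ (by omega)) ?_ ?_ ?_ ?_ ?_ ?_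
      · refine ofFn_chain'' _ ?_
        intro k hk
        simp only []
        have h1 := hbwdM (a - k - 1) (by omega) (hmin _ (by omega) (by omega))
        have e1 : mfun ⟨a - k, by omega⟩ = mfun ⟨a - k - 1 + 1, by omega⟩ :=
          mcongr _ _ _ _ (by omega)
        have e2 : mfun ⟨a - (k+1), by omega⟩ = mfun ⟨a - k - 1, by omega⟩ :=
          mcongr _ _ _ _ (by omega)
        rw [e1, e2]
        exact h1
      · refine ofFn_chain'' _ ?_
        intro j hj
        simp only []
        have hedge : p.e ⟨a + 1 + j, by omega⟩ = .fwd :=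
          hfwd (a + 1 + j) (by omega) (by omega)
        have h1 := hfwdM (a + 1 + j) (by omega) hedge
        have e2 : mfun ⟨a + 1 + (j+1), by omega⟩ = mfun ⟨a + 1 + j + 1, by omega⟩ :=
          mcongr _ _ _ _ (by omega)
        rw [e2]
        exact h1
      · rw [ofFn_getLast?' _ (by omega)]
        have e1 : mfun ⟨a - (a + 1 - 1), by omega⟩ = mfun ⟨0, by omega⟩ :=
          mcongr _ _ _ _ (by omega)
        rw [e1, Fin.mk_zero, hW0]
      · rw [ofFn_getLast?' _ (by omega)]
        have e1 : mfun ⟨a + 1 + (n - a - 1), by omega⟩ = mfun ⟨n, by omega⟩ :=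
          mcongr _ _ _ _ (by omega)
        rw [e1]
        have : mfun ⟨n, by omega⟩ = Y := hYl
        rw [this]
      · simp only [if_pos rfl]
        intro mm mm' h1 h2
        rw [ofFn_head?' _ (by omega)] at h1
        rw [ofFn_head?' _ (by omega)] at h2
        have hmm : mm = mfun ⟨a - 0, by omega⟩ := (Option.some_injective _ h1).symm
        have hmm' : mm' = mfun ⟨a + 1 + 0, by omega⟩ := (Option.some_injective _ h2).symm
        rw [hmm, hmm']
        have e1 : mfun ⟨a - 0, by omega⟩ = mfun ⟨a, by omega⟩ := mcongr _ _ _ _ (by omega)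
        have e2 : mfun ⟨a + 1 + 0, by omega⟩ = mfun ⟨a + 1, by omega⟩ :=
          mcongr _ _ _ _ (by omega)
        rw [e1, e2]
        exact hbidM a halt hacase
      · intro h
        obtain ⟨j, hj⟩ := mem_ofFn' _ h
        have := hWuniq _ hj
        simp at this
      · intro h
        obtain ⟨i, hi⟩ := mem_ofFn' _ h
        exact hXm _ hi
      · intro h
        obtain ⟨i, hi⟩ := mem_ofFn' _ h
        exact hXm _ hi

/-- **Property 2.** If every back-door path from `W` to `Y` in the SCG
`Gs` is blocked by `{X}`, then in every candidate FT-ADMG, every collider-free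
back-door path from `W_{t-λ}` to `Y_t` passes through a micro vertex of the macro
vertex `X` or through a micro vertex `W_{t-λ''}` with `λ'' ≠ λ`. -/
theorem property2 {d : ℕ} {t0 tmax : ℤ} {γmax : ℕ}
    (Gs : SCG d) (W Y X : Fin d) (hWY : W ≠ Y)
    (hbd : ∀ (n : ℕ) (hn : 0 < n) (q : MPath (Fin d) Gs.dir Gs.bi n),
      q.v 0 = W → q.v (Fin.last n) = Y → Gs.BackdoorStart q hn →
      Gs.BlockedByOne q X) :
    ∀ G : FTADMG d t0 tmax γmax, IsCandidate Gs G →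
      ∀ (s1 s2 : ℤ) (n : ℕ) (hn : 0 < n) (p : MPath (Fin d × ℤ) G.dir G.bi n),
        p.v 0 = (W, s1) → p.v (Fin.last n) = (Y, s2) →
        (p.e ⟨0, hn⟩).headLeft → p.ColliderFree →
        ∃ i : Fin (n + 1), (p.v i).1 = X ∨ ((p.v i).1 = W ∧ (p.v i).2 ≠ s1) := by
  exact property2' Gs W Y X hWY hbd
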